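/- Let V be a complex inner product space, let n be a natural number, let 0 ≤ t < 1, and let a ∈ Vⁿ be obtained as a = Σᵢ αᵢ vᵢ and b = Σᵢ cᵢ αᵢ vᵢ, where (vᵢ) is an orthonormal family in V, αᵢ ∈ ℂ are not all zero, and cᵢ are real numbers with 1 − t ≤ cᵢ ≤ 1 + t for all i. Then a ≠ 0, b ≠ 0, and the normalized vectors satisfy ‖ b/‖b‖ − a/‖a‖ ‖ ≤ 2t/(1 − t). -/

import Mathlib

lemma on_norm_sq {V : Type*} [NormedAddCommGroup V] [InnerProductSpace ℂ V]
    {n : ℕ} {v : Fin n → V} (hv : Orthonormal ℂ v) (l : Fin n → ℂ) :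
    ‖∑ i, l i • v i‖ ^ 2 = ∑ i, ‖l i‖ ^ 2 := by
  have h2 := norm_sq_eq_re_inner (𝕜 := ℂ) (∑ i, l i • v i)
  rw [hv.inner_sum l l Finset.univ, map_sum] at h2
  rw [h2]
  refine Finset.sum_congr rfl fun i _ => ?_
  rw [Complex.conj_mul']
  norm_cast


/-- If each coefficient of a vector (expanded in an orthonormal family) is perturbed
multiplicatively by a real factor in `[1 − t, 1 + t]` with `0 ≤ t < 1`, then the
corresponding unit vectors differ in norm by at most `2t/(1 − t)`. -/
theorem normalized_perturbation_bound
    {V : Type*} [NormedAddCommGroup V] [InnerProductSpace ℂ V]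
    (n : ℕ) (t : ℝ) (ht : 0 ≤ t) (ht1 : t < 1)
    (v : Fin n → V) (hv : Orthonormal ℂ v)
    (α : Fin n → ℂ) (hα : α ≠ 0)
    (c : Fin n → ℝ) (hc : ∀ i, 1 - t ≤ c i ∧ c i ≤ 1 + t) :
    let a : V := ∑ i, α i • v i
    let b : V := ∑ i, ((c i : ℂ) * α i) • v i
    a ≠ 0 ∧ b ≠ 0 ∧ ‖‖b‖⁻¹ • b - ‖a‖⁻¹ • a‖ ≤ 2 * t / (1 - t) := by
  intro a b
  obtain ⟨j, hj⟩ : ∃ j, α j ≠ 0 := by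
    by_contra h; push_neg at h; exact hα (funext h)
  have hA : ‖a‖ ^ 2 = ∑ i, ‖α i‖ ^ 2 := on_norm_sq hv α
  -- a ≠ 0
  have hApos : 0 < ‖a‖ := by
    have : 0 < ‖a‖ ^ 2 := by
      rw [hA]
      refine lt_of_lt_of_le (pow_pos (norm_pos_iff.mpr hj) 2)
        (Finset.single_le_sum (f := fun i => ‖α i‖ ^ 2)
        (fun i _ => by positivity) (Finset.mem_univ j))
    nlinarith [norm_nonneg a]
  have ha0 : a ≠ 0 := by
    intro h; rw [h, norm_zero] at hApos; exact lt_irrefl 0 hApos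
  -- b - a
  have hba : b - a = ∑ i, (((c i : ℂ) - 1) * α i) • v i := by
    rw [← Finset.sum_sub_distrib]
    refine Finset.sum_congr rfl fun i _ => ?_
    rw [← sub_smul]; ring_nf
  have hbaA : ‖b - a‖ ≤ t * ‖a‖ := by
    have h1 : ‖b - a‖ ^ 2 = ∑ i, ‖((c i : ℂ) - 1) * α i‖ ^ 2 := by
      rw [hba]; exact on_norm_sq hv _
    have h2 : ‖b - a‖ ^ 2 ≤ t ^ 2 * ‖a‖ ^ 2 := by
      rw [h1, hA, Finset.mul_sum]
      refine Finset.sum_le_sum fun i _ => ?_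
      have hci : |c i - 1| ≤ t := abs_le.mpr ⟨by linarith [(hc i).1], by linarith [(hc i).2]⟩
      have : ‖((c i : ℂ) - 1) * α i‖ = |c i - 1| * ‖α i‖ := by
        rw [norm_mul]
        norm_cast
      rw [this, mul_pow]
      have := sq_le_sq' (by linarith [abs_nonneg (c i - 1)]) hci
      nlinarith [norm_nonneg (α i), sq_nonneg (‖α i‖), abs_nonneg (c i - 1)]
    nlinarith [norm_nonneg (b - a), mul_nonneg ht hApos.le]
  -- b ≠ 0
  have hBpos : 0 < ‖b‖ := by
    rcases lt_or_ge 0 ‖b‖ with h | h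
    · exact h
    · exfalso
      have hb0 : ‖b‖ = 0 := le_antisymm h (norm_nonneg b)
      have : b = 0 := norm_eq_zero.mp hb0
      rw [this, zero_sub, norm_neg] at hbaA
      nlinarith
  have hb0 : b ≠ 0 := by
    intro h; rw [h, norm_zero] at hBpos; exact lt_irrefl 0 hBpos
  refine ⟨ha0, hb0, ?_⟩
  -- main bound
  have hsplit : ‖b‖⁻¹ • b - ‖a‖⁻¹ • a = ‖a‖⁻¹ • (b - a) + (‖b‖⁻¹ - ‖a‖⁻¹) • b := by
    module
  have hdiff : |‖a‖ - ‖b‖| ≤ ‖b - a‖ := by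
    rw [← norm_sub_rev]; exact abs_norm_sub_norm_le a b
  have hterm2 : |‖b‖⁻¹ - ‖a‖⁻¹| * ‖b‖ ≤ ‖b - a‖ / ‖a‖ := by
    have h1 : ‖b‖⁻¹ - ‖a‖⁻¹ = (‖a‖ - ‖b‖) / (‖b‖ * ‖a‖) :=
      inv_sub_inv hBpos.ne' hApos.ne'
    rw [h1, abs_div, abs_of_pos (mul_pos hBpos hApos)]
    rw [div_mul_eq_mul_div, div_le_div_iff₀ (mul_pos hBpos hApos) hApos]
    calc |‖a‖ - ‖b‖| * ‖b‖ * ‖a‖ ≤ ‖b - a‖ * ‖b‖ * ‖a‖ := by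
          apply mul_le_mul_of_nonneg_right (mul_le_mul_of_nonneg_right hdiff hBpos.le) hApos.le
      _ = ‖b - a‖ * (‖b‖ * ‖a‖) := by ring
  have hnorm : ‖‖b‖⁻¹ • b - ‖a‖⁻¹ • a‖ ≤ 2 * t := by
    calc ‖‖b‖⁻¹ • b - ‖a‖⁻¹ • a‖
        ≤ ‖‖a‖⁻¹ • (b - a)‖ + ‖(‖b‖⁻¹ - ‖a‖⁻¹) • b‖ := by rw [hsplit]; exact norm_add_le _ _
      _ = ‖a‖⁻¹ * ‖b - a‖ + |‖b‖⁻¹ - ‖a‖⁻¹| * ‖b‖ := by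
          rw [norm_smul, norm_smul, Real.norm_eq_abs, Real.norm_eq_abs,
            abs_of_pos (inv_pos.mpr hApos)]
      _ ≤ ‖a‖⁻¹ * ‖b - a‖ + ‖b - a‖ / ‖a‖ := by linarith
      _ = 2 * (‖b - a‖ / ‖a‖) := by rw [div_eq_inv_mul]; ring
      _ ≤ 2 * t := by
          have : ‖b - a‖ / ‖a‖ ≤ t := (div_le_iff₀ hApos).mpr (by linarith)
          linarith
  refine hnorm.trans ?_
  rw [le_div_iff₀ (by linarith)]
  nlinarith
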